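/- For every ε > 0 there exists a smooth function β̃_ε : ℝ → [0,1] such that β̃_ε(r) = 1 for all r ≥ 1, β̃_ε(r) = 0 for all r ≤ e^{−1/ε}, and 2π · ∫₀^∞ (β̃_ε′(r))² · r dr ≤ 8ε (equivalently, ∫_ℂ |β̃_ε′(|z|)|² dA(z) ≤ 8ε, where dA is the Lebesgue measure on ℂ ≅ ℝ²). -/

import Mathlib

open MeasureTheory

/-- A smooth plateau bump: nonnegative, `≤ 1`, vanishing outside `(0,1)`,
and equal to `1` on `[1/20, 19/20]`. -/
noncomputable def psi0 (t : ℝ) : ℝ :=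
  Real.smoothTransition (20 * t) * Real.smoothTransition (20 * (1 - t))

lemma psi0_contDiff : ContDiff ℝ (⊤ : ℕ∞) psi0 :=
  (Real.smoothTransition.contDiff.comp (contDiff_const.mul contDiff_id)).mul
    (Real.smoothTransition.contDiff.comp (contDiff_const.mul (contDiff_const.sub contDiff_id)))

lemma psi0_continuous : Continuous psi0 := psi0_contDiff.continuous

lemma psi0_nonneg (t : ℝ) : 0 ≤ psi0 t :=
  mul_nonneg (Real.smoothTransition.nonneg _) (Real.smoothTransition.nonneg _)

lemma psi0_le_one (t : ℝ) : psi0 t ≤ 1 :=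
  mul_le_one₀ (Real.smoothTransition.le_one _) (Real.smoothTransition.nonneg _)
    (Real.smoothTransition.le_one _)

lemma psi0_eq_zero_of_nonpos {t : ℝ} (ht : t ≤ 0) : psi0 t = 0 := by
  unfold psi0
  rw [Real.smoothTransition.zero_of_nonpos (by linarith), zero_mul]

lemma psi0_eq_zero_of_one_le {t : ℝ} (ht : 1 ≤ t) : psi0 t = 0 := by
  unfold psi0
  rw [Real.smoothTransition.zero_of_nonpos (show 20 * (1 - t) ≤ 0 by linarith), mul_zero]

lemma psi0_eq_one {t : ℝ} (h1 : 1/20 ≤ t) (h2 : t ≤ 19/20) : psi0 t = 1 := by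
  unfold psi0
  rw [Real.smoothTransition.one_of_one_le (by linarith),
    Real.smoothTransition.one_of_one_le (by linarith), mul_one]

/-- The total mass of `psi0`. -/
noncomputable def Ipsi : ℝ := ∫ s in (0:ℝ)..1, psi0 s

lemma Ipsi_ge : (9:ℝ)/10 ≤ Ipsi := by
  have hint : ∀ a b : ℝ, IntervalIntegrable psi0 volume a b := fun a b =>
    psi0_continuous.intervalIntegrable a b
  have hsplit1 : (∫ s in (0:ℝ)..(1/20), psi0 s) + ∫ s in (1/20:ℝ)..1, psi0 s = Ipsi :=
    intervalIntegral.integral_add_adjacent_intervals (hint _ _) (hint _ _)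
  have hsplit2 : (∫ s in (1/20:ℝ)..(19/20), psi0 s) + ∫ s in (19/20:ℝ)..1, psi0 s
      = ∫ s in (1/20:ℝ)..1, psi0 s :=
    intervalIntegral.integral_add_adjacent_intervals (hint _ _) (hint _ _)
  have h1 : (0:ℝ) ≤ ∫ s in (0:ℝ)..(1/20), psi0 s :=
    intervalIntegral.integral_nonneg (by norm_num) (fun s _ => psi0_nonneg s)
  have h3 : (0:ℝ) ≤ ∫ s in (19/20:ℝ)..1, psi0 s :=
    intervalIntegral.integral_nonneg (by norm_num) (fun s _ => psi0_nonneg s)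
  have h2 : (∫ s in (1/20:ℝ)..(19/20), psi0 s) = 9/10 := by
    have : (∫ s in (1/20:ℝ)..(19/20), psi0 s) = ∫ _ in (1/20:ℝ)..(19/20), (1:ℝ) := by
      apply intervalIntegral.integral_congr
      intro s hs
      rw [Set.uIcc_of_le (by norm_num)] at hs
      exact psi0_eq_one hs.1 hs.2
    rw [this]
    simp
    norm_num
  linarith

lemma Ipsi_pos : 0 < Ipsi := lt_of_lt_of_le (by norm_num) Ipsi_ge

/-- The smooth monotone step function: `0` for `t ≤ 0`, `1` for `t ≥ 1`. -/
noncomputable def phi (t : ℝ) : ℝ := (∫ s in (0:ℝ)..t, psi0 s) / Ipsi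

lemma phi_hasDerivAt (t : ℝ) : HasDerivAt phi (psi0 t / Ipsi) t := by
  have h : HasDerivAt (fun u => ∫ s in (0:ℝ)..u, psi0 s) (psi0 t) t :=
    intervalIntegral.integral_hasDerivAt_right (psi0_continuous.intervalIntegrable _ _)
      (psi0_continuous.stronglyMeasurableAtFilter _ _) psi0_continuous.continuousAt
  exact h.div_const Ipsi

lemma phi_deriv : deriv phi = fun t => psi0 t / Ipsi :=
  funext fun t => (phi_hasDerivAt t).deriv

lemma phi_contDiff : ContDiff ℝ (⊤ : ℕ∞) phi := by
  rw [contDiff_infty_iff_deriv]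
  refine ⟨fun t => (phi_hasDerivAt t).differentiableAt, ?_⟩
  rw [phi_deriv]
  exact psi0_contDiff.div_const _

lemma phi_zero {t : ℝ} (ht : t ≤ 0) : phi t = 0 := by
  unfold phi
  have : (∫ s in (0:ℝ)..t, psi0 s) = ∫ _ in (0:ℝ)..t, (0:ℝ) := by
    apply intervalIntegral.integral_congr
    intro s hs
    rw [Set.uIcc_of_ge ht] at hs
    exact psi0_eq_zero_of_nonpos hs.2
  rw [this]
  simp

lemma phi_one {t : ℝ} (ht : 1 ≤ t) : phi t = 1 := by
  unfold phi
  have hsplit : Ipsi + ∫ s in (1:ℝ)..t, psi0 s = ∫ s in (0:ℝ)..t, psi0 s :=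
    intervalIntegral.integral_add_adjacent_intervals
      (psi0_continuous.intervalIntegrable _ _) (psi0_continuous.intervalIntegrable _ _)
  have hzero : (∫ s in (1:ℝ)..t, psi0 s) = 0 := by
    have : (∫ s in (1:ℝ)..t, psi0 s) = ∫ _ in (1:ℝ)..t, (0:ℝ) := by
      apply intervalIntegral.integral_congr
      intro s hs
      rw [Set.uIcc_of_le ht] at hs
      exact psi0_eq_zero_of_one_le hs.1
    rw [this]; simp
  rw [← hsplit, hzero, add_zero, div_self (ne_of_gt Ipsi_pos)]

lemma phi_mono : Monotone phi := by
  intro s t hst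
  unfold phi
  apply (div_le_div_iff_of_pos_right Ipsi_pos).mpr
  have hsplit : (∫ u in (0:ℝ)..s, psi0 u) + ∫ u in s..t, psi0 u = ∫ u in (0:ℝ)..t, psi0 u :=
    intervalIntegral.integral_add_adjacent_intervals
      (psi0_continuous.intervalIntegrable _ _) (psi0_continuous.intervalIntegrable _ _)
  have : (0:ℝ) ≤ ∫ u in s..t, psi0 u :=
    intervalIntegral.integral_nonneg hst (fun u _ => psi0_nonneg u)
  linarith

lemma phi_mem_Icc (t : ℝ) : phi t ∈ Set.Icc (0:ℝ) 1 := by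
  constructor
  · have := phi_mono (min_le_left t 0)
    rwa [phi_zero (min_le_right t 0)] at this
  · have := phi_mono (le_max_left t 1)
    rwa [phi_one (le_max_right t 1)] at this

set_option maxHeartbeats 1000000 in
theorem stmt_5 :
    ∀ ε : ℝ, 0 < ε →
      ∃ β : ℝ → ℝ, ContDiff ℝ (⊤ : ℕ∞) β ∧
        (∀ r : ℝ, β r ∈ Set.Icc (0 : ℝ) 1) ∧
        (∀ r : ℝ, 1 ≤ r → β r = 1) ∧
        (∀ r : ℝ, r ≤ Real.exp (-1 / ε) → β r = 0) ∧
        2 * Real.pi * ∫ r in Set.Ioi (0 : ℝ), (deriv β r) ^ 2 * r ≤ 8 * ε := by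
  intro ε hε
  set a : ℝ := Real.exp (-1 / ε) with ha_def
  have ha_pos : 0 < a := Real.exp_pos _
  have ha_le_one : a ≤ 1 := by
    rw [ha_def]
    have h : -1/ε < 0 := div_neg_of_neg_of_pos (by norm_num) hε
    exact Real.exp_le_one_iff.mpr h.le
  set c : ℝ := Real.exp (1 / ε) with hc_def
  have hc_pos : 0 < c := Real.exp_pos _
  have hca : c * a = 1 := by
    rw [ha_def, hc_def, ← Real.exp_add, show 1/ε + -1/ε = 0 by ring, Real.exp_zero]
  have hc_ge_one : 1 ≤ c := Real.one_le_exp (by positivity)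
  set β : ℝ → ℝ := fun r => phi (1 + ε * Real.log r) * phi (c * r) with hβ_def
  -- β vanishes for r ≤ a
  have h0 : ∀ r : ℝ, r ≤ a → β r = 0 := by
    intro r hr
    rcases le_or_gt r 0 with h | h
    · have : phi (c * r) = 0 := phi_zero (mul_nonpos_of_nonneg_of_nonpos hc_pos.le h)
      simp [hβ_def, this]
    · have hlog : Real.log r ≤ -1 / ε := by
        rw [ha_def] at hr
        calc Real.log r ≤ Real.log a := Real.log_le_log h hr
        _ = -1 / ε := Real.log_exp _
      have : phi (1 + ε * Real.log r) = 0 := by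
        apply phi_zero
        have h2 : ε * Real.log r ≤ ε * (-1 / ε) :=
          mul_le_mul_of_nonneg_left hlog hε.le
        have h3 : ε * (-1 / ε) = -1 := by field_simp
        linarith
      simp [hβ_def, this]
  -- second factor is 1 for r ≥ a
  have hfac2 : ∀ r : ℝ, a ≤ r → phi (c * r) = 1 := by
    intro r hr
    apply phi_one
    calc (1:ℝ) = c * a := hca.symm
    _ ≤ c * r := mul_le_mul_of_nonneg_left hr hc_pos.le
  have hmid : ∀ r : ℝ, a ≤ r → β r = phi (1 + ε * Real.log r) := by
    intro r hr
    simp [hβ_def, hfac2 r hr]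
  -- β is 1 for r ≥ 1
  have h1 : ∀ r : ℝ, 1 ≤ r → β r = 1 := by
    intro r hr
    rw [hmid r (le_trans ha_le_one hr), phi_one]
    have : 0 ≤ Real.log r := Real.log_nonneg hr
    nlinarith
  -- smoothness
  have hβ_smooth : ContDiff ℝ (⊤ : ℕ∞) β := by
    rw [contDiff_iff_contDiffAt]
    intro x
    rcases lt_or_ge x a with hx | hx
    · exact (contDiffAt_const (c := (0:ℝ))).congr_of_eventuallyEq
        (Filter.eventuallyEq_of_mem (Iio_mem_nhds hx) (fun y hy => h0 y (le_of_lt hy)))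
    · have hx0 : 0 < x := lt_of_lt_of_le ha_pos hx
      apply ContDiffAt.mul
      · exact (phi_contDiff.contDiffAt).comp x
          (contDiffAt_const.add (contDiffAt_const.mul (Real.contDiffAt_log.mpr (ne_of_gt hx0))))
      · exact (phi_contDiff.contDiffAt).comp x (contDiffAt_const.mul contDiffAt_id)
  -- values in [0,1]
  have hmem : ∀ r : ℝ, β r ∈ Set.Icc (0:ℝ) 1 := by
    intro r
    have m1 := phi_mem_Icc (1 + ε * Real.log r)
    have m2 := phi_mem_Icc (c * r)
    exact ⟨mul_nonneg m1.1 m2.1, mul_le_one₀ m1.2 m2.1 m2.2⟩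
  refine ⟨β, hβ_smooth, hmem, h1, fun r hr => h0 r hr, ?_⟩
  -- derivative identities
  have hderiv_lt : ∀ r : ℝ, r < a → deriv β r = 0 := by
    intro r hr
    have hev : β =ᶠ[nhds r] fun _ => (0:ℝ) :=
      Filter.eventuallyEq_of_mem (Iio_mem_nhds hr) (fun y hy => h0 y (le_of_lt hy))
    rw [hev.deriv_eq, deriv_const]
  have hderiv_gt : ∀ r : ℝ, 1 < r → deriv β r = 0 := by
    intro r hr
    have hev : β =ᶠ[nhds r] fun _ => (1:ℝ) :=
      Filter.eventuallyEq_of_mem (Ioi_mem_nhds hr) (fun y hy => h1 y (le_of_lt hy))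
    rw [hev.deriv_eq, deriv_const]
  have hderiv_mid : ∀ r : ℝ, a < r →
      deriv β r = (psi0 (1 + ε * Real.log r) / Ipsi) * (ε / r) := by
    intro r hr
    have hr0 : 0 < r := lt_trans ha_pos hr
    have hg : HasDerivAt (fun s : ℝ => 1 + ε * Real.log s) (ε / r) r := by
      have := ((Real.hasDerivAt_log (ne_of_gt hr0)).const_mul ε).const_add 1
      simpa [div_eq_mul_inv] using this
    have hcomp : HasDerivAt (fun s => phi (1 + ε * Real.log s))
        ((psi0 (1 + ε * Real.log r) / Ipsi) * (ε / r)) r :=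
      by have := (phi_hasDerivAt (1 + ε * Real.log r)).comp r hg; exact this
    have hev : β =ᶠ[nhds r] fun s => phi (1 + ε * Real.log s) :=
      Filter.eventuallyEq_of_mem (Ioi_mem_nhds hr) (fun y hy => hmid y (le_of_lt hy))
    rw [hev.deriv_eq]
    exact hcomp.deriv
  set f : ℝ → ℝ := fun r => (deriv β r) ^ 2 * r with hf_def
  have hf_cont : Continuous f :=
    ((hβ_smooth.continuous_deriv (by exact_mod_cast le_top)).pow 2).mul continuous_id
  have hf_supp : HasCompactSupport f := by
    apply HasCompactSupport.intro (isCompact_Icc (a := a) (b := 1))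
    intro x hx
    simp only [Set.mem_Icc, not_and_or, not_le] at hx
    rcases hx with h | h
    · simp [hf_def, hderiv_lt x h]
    · simp [hf_def, hderiv_gt x h]
  have hf_int : Integrable f := hf_cont.integrable_of_hasCompactSupport hf_supp
  -- split the integral
  have hsplit1 : ∫ r in Set.Ioi (0:ℝ), f r
      = (∫ r in Set.Ioc 0 a, f r) + ∫ r in Set.Ioi a, f r := by
    rw [← Set.Ioc_union_Ioi_eq_Ioi ha_pos.le]
    exact setIntegral_union (Set.Ioc_disjoint_Ioi le_rfl) measurableSet_Ioi
      hf_int.integrableOn hf_int.integrableOn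
  have hsplit2 : ∫ r in Set.Ioi a, f r
      = (∫ r in Set.Ioc a 1, f r) + ∫ r in Set.Ioi 1, f r := by
    rw [← Set.Ioc_union_Ioi_eq_Ioi ha_le_one]
    exact setIntegral_union (Set.Ioc_disjoint_Ioi le_rfl) measurableSet_Ioi
      hf_int.integrableOn hf_int.integrableOn
  have hzero1 : (∫ r in Set.Ioc (0:ℝ) a, f r) = 0 := by
    rw [integral_Ioc_eq_integral_Ioo]
    rw [setIntegral_congr_fun measurableSet_Ioo
      (g := fun _ => (0:ℝ)) (fun x hx => by simp [hf_def, hderiv_lt x hx.2])]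
    simp
  have hzero2 : (∫ r in Set.Ioi (1:ℝ), f r) = 0 := by
    rw [setIntegral_congr_fun measurableSet_Ioi
      (g := fun _ => (0:ℝ)) (fun x hx => by simp [hf_def, hderiv_gt x hx])]
    simp
  -- main piece via change of variables
  have hmain : (∫ r in Set.Ioc a 1, f r)
      = ∫ t in (0:ℝ)..1, ε * (psi0 t / Ipsi) ^ 2 := by
    have hIoo : (∫ r in Set.Ioc a 1, f r)
        = ∫ r in Set.Ioc a 1, (fun x => (ε / x) • (ε * (psi0 (1 + ε * Real.log x) / Ipsi) ^ 2)) r := by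
      rw [integral_Ioc_eq_integral_Ioo, integral_Ioc_eq_integral_Ioo]
      apply setIntegral_congr_fun measurableSet_Ioo
      intro x hx
      have hx0 : 0 < x := lt_trans ha_pos hx.1
      have hx' : x ≠ 0 := ne_of_gt hx0
      rw [hf_def]
      simp only [hderiv_mid x hx.1, smul_eq_mul]
      field_simp
    rw [hIoo, ← intervalIntegral.integral_of_le ha_le_one]
    have hsub := intervalIntegral.integral_comp_smul_deriv
      (a := a) (b := 1) (f := fun s : ℝ => 1 + ε * Real.log s)
      (f' := fun x => ε / x) (g := fun t => ε * (psi0 t / Ipsi) ^ 2)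
      (fun x hx => by
        rw [Set.uIcc_of_le ha_le_one] at hx
        have hx0 : 0 < x := lt_of_lt_of_le ha_pos hx.1
        have := ((Real.hasDerivAt_log (ne_of_gt hx0)).const_mul ε).const_add 1
        simpa [div_eq_mul_inv] using this)
      (by
        apply ContinuousOn.div continuousOn_const continuousOn_id
        intro x hx
        rw [Set.uIcc_of_le ha_le_one] at hx
        exact ne_of_gt (lt_of_lt_of_le ha_pos hx.1))
      (continuous_const.mul ((psi0_continuous.div_const _).pow 2))
    have hfa : 1 + ε * Real.log a = 0 := by
      rw [ha_def, Real.log_exp]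
      field_simp
      norm_num
    have hf1 : 1 + ε * Real.log 1 = 1 := by simp
    simp only [Function.comp_apply, hfa, hf1] at hsub
    exact hsub
  -- bound the model integral
  have hbound : (∫ t in (0:ℝ)..1, ε * (psi0 t / Ipsi) ^ 2) ≤ ε / Ipsi := by
    have hle : (∫ t in (0:ℝ)..1, ε * (psi0 t / Ipsi) ^ 2)
        ≤ ∫ t in (0:ℝ)..1, (ε / Ipsi ^ 2) * psi0 t := by
      apply intervalIntegral.integral_mono_on (by norm_num)
      · exact (continuous_const.mul ((psi0_continuous.div_const _).pow 2)).intervalIntegrable _ _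
      · exact (continuous_const.mul psi0_continuous).intervalIntegrable _ _
      · intro t _
        have h1 : psi0 t ^ 2 ≤ psi0 t := by
          nlinarith [psi0_nonneg t, psi0_le_one t]
        have h2 : (0:ℝ) < Ipsi ^ 2 := pow_pos Ipsi_pos 2
        rw [div_pow]
        calc ε * (psi0 t ^ 2 / Ipsi ^ 2) ≤ ε * (psi0 t / Ipsi ^ 2) := by
              apply mul_le_mul_of_nonneg_left _ hε.le
              exact div_le_div_of_nonneg_right h1 h2.le
        _ = ε / Ipsi ^ 2 * psi0 t := by ring
    have heq : (∫ t in (0:ℝ)..1, (ε / Ipsi ^ 2) * psi0 t) = ε / Ipsi := by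
      rw [intervalIntegral.integral_const_mul]
      show ε / Ipsi ^ 2 * Ipsi = ε / Ipsi
      have hI : Ipsi ≠ 0 := ne_of_gt Ipsi_pos
      field_simp
    linarith
  -- put everything together
  have htotal : (∫ r in Set.Ioi (0:ℝ), f r) ≤ ε / Ipsi := by
    rw [hsplit1, hsplit2, hzero1, hzero2, hmain]
    linarith
  have hgoal : (∫ r in Set.Ioi (0:ℝ), (deriv β r) ^ 2 * r) = ∫ r in Set.Ioi (0:ℝ), f r := rfl
  rw [hgoal]
  have hπ : (0:ℝ) ≤ 2 * Real.pi := by positivity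
  calc 2 * Real.pi * ∫ r in Set.Ioi (0:ℝ), f r ≤ 2 * Real.pi * (ε / Ipsi) :=
        mul_le_mul_of_nonneg_left htotal hπ
  _ ≤ 8 * ε := by
      have h1 : ε / Ipsi ≤ ε * (10 / 9) := by
        rw [div_le_iff₀ Ipsi_pos]
        nlinarith [Ipsi_ge, hε.le]
      have hπ2 : Real.pi < 3.15 := Real.pi_lt_d2
      nlinarith [Real.pi_pos, hε.le, mul_le_mul_of_nonneg_left h1 hπ]
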